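/- Let E be a complex Hilbert space, d ≥ 1, F : Fin d → E an orthonormal family, and q : Fin d → ℝ a probability vector. Let ψ := ∑ i, (Real.sqrt (q i) : ℂ) • F i. Then: (i) ‖ψ‖ = 1; (ii) ‖⟪F i, ψ⟫‖² = q i for every i; and (iii) there exists a unitary U : E ≃ₗᵢ[ℂ] E with U ψ = F 0, so that ‖⟪F 0, U ψ⟫‖² = 1. (This is the achievability part of the paper's Result 3: in universal quantum theory with Non-absoluteness of Measurement there is a realization with p(i|A,𝟙) = qᵢ and p(0|A,U) = 1, hence T(q) = 1 for every probability vector q, violating the Absoluteness-of-Measurement bound T(q) ≤ max qᵢ.) -/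

import Mathlib

open scoped ComplexInnerProductSpace

/-- Achievability part of Result 3 (NoM): with `ψ = ∑ i √(q i) F i` one has
`‖ψ‖ = 1`, `p(i|A,𝟙) = q i`, and a unitary `U` with `U ψ = F 0`,
hence `p(0|A,U) = 1`. -/
theorem stmt_8 {E : Type*} [NormedAddCommGroup E] [InnerProductSpace ℂ E]
    [CompleteSpace E]
    {d : ℕ} (hd : 0 < d) (F : Fin d → E) (hF : Orthonormal ℂ F)
    (q : Fin d → ℝ) (hq : ∀ i, 0 ≤ q i) (hqsum : ∑ i, q i = 1)
    (ψ : E) (hψ : ψ = ∑ i, ((Real.sqrt (q i) : ℝ) : ℂ) • F i) :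
    ‖ψ‖ = 1 ∧ (∀ i, ‖⟪F i, ψ⟫‖ ^ 2 = q i) ∧
      ∃ U : E ≃ₗᵢ[ℂ] E, U ψ = F ⟨0, hd⟩ ∧ ‖⟪F ⟨0, hd⟩, U ψ⟫‖ ^ 2 = 1 := by
  have hinner : ∀ i, ⟪F i, ψ⟫ = ((Real.sqrt (q i) : ℝ) : ℂ) := by
    intro i
    rw [hψ, hF.inner_right_fintype]
  have hinner2 : ∀ i, ‖⟪F i, ψ⟫‖ ^ 2 = q i := by
    intro i
    rw [hinner i, Complex.norm_real, Real.norm_eq_abs, sq_abs,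
      Real.sq_sqrt (hq i)]
  have hself : ⟪ψ, ψ⟫ = 1 := by
    rw [hψ, hF.inner_sum]
    simp only [Complex.conj_ofReal, ← Complex.ofReal_mul, ← Complex.ofReal_sum]
    norm_cast
    rw [← hqsum]
    exact Finset.sum_congr rfl fun i _ => Real.mul_self_sqrt (hq i)
  have hnorm : ‖ψ‖ = 1 := by
    rw [norm_eq_sqrt_re_inner (𝕜 := ℂ) ψ, hself]
    simp
  refine ⟨hnorm, hinner2, ?_⟩
  set w : E := F ⟨0, hd⟩ with hw
  have hwnorm : ‖w‖ = 1 := hF.1 _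
  have hinnerw : ⟪w, ψ⟫ = ((Real.sqrt (q ⟨0, hd⟩) : ℝ) : ℂ) := hinner _
  suffices h : ∃ U : E ≃ₗᵢ[ℂ] E, U ψ = w by
    obtain ⟨U, hU⟩ := h
    refine ⟨U, hU, ?_⟩
    rw [hU, show ⟪w, w⟫ = ((‖w‖ : ℝ) : ℂ) ^ 2 from
      (inner_self_eq_norm_sq_to_K (𝕜 := ℂ) w), hwnorm]
    norm_num
  refine ⟨Submodule.reflection (ℂ ∙ (ψ - w))ᗮ, ?_⟩
  set R : E ≃ₗᵢ[ℂ] E := Submodule.reflection (ℂ ∙ (ψ - w))ᗮ with hR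
  have h₁ : R (ψ - w) = -(ψ - w) :=
    Submodule.reflection_orthogonalComplement_singleton_eq_neg (ψ - w)
  have h₂ : R (ψ + w) = ψ + w := by
    apply Submodule.reflection_mem_subspace_eq_self
    rw [Submodule.mem_orthogonal_singleton_iff_inner_left]
    rw [inner_sub_right, inner_add_left, inner_add_left]
    have e1 : ⟪ψ, ψ⟫ = 1 := hself
    have e2 : ⟪w, w⟫ = 1 := by
      rw [inner_self_eq_norm_sq_to_K (𝕜 := ℂ) w, hwnorm]; norm_num
    have e3 : ⟪ψ, w⟫ = ((Real.sqrt (q ⟨0, hd⟩) : ℝ) : ℂ) := by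
      rw [← inner_conj_symm, hinnerw, Complex.conj_ofReal]
    rw [e1, e2, e3, hinnerw]
    ring
  have key : R ψ + R ψ = w + w := by
    have := congrArg₂ (· + ·) h₂ h₁
    simp only [map_add, map_sub] at this ⊢
    rw [show R ψ + R w + (R ψ - R w) = R ψ + R ψ by abel] at this
    rw [this]; abel
  have : (2 : ℂ) • R ψ = (2 : ℂ) • w := by
    rw [two_smul, two_smul]; exact key
  exact smul_right_injective E (by norm_num : (2 : ℂ) ≠ 0) this
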